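/- On the elliptic curve E₁ : y² = x³ + x² + x over ℚ(√3, i), the point B = (-2-√3, 3i + 2i√3) lies on E₁ and has order 8. -/

import Mathlib

open WeierstrassCurve Complex

/-- The elliptic curve `E₁ : y² = x³ + x² + x` (Cremona 48a4), over `ℂ`. -/
def E48a4 : Affine ℂ := { a₁ := 0, a₂ := 1, a₃ := 0, a₄ := 1, a₆ := 0 }

lemma E48a4.some_eq_some {x₁ y₁ x₂ y₂ : ℂ} (h₁ : E48a4.Nonsingular x₁ y₁)
    (h₂ : E48a4.Nonsingular x₂ y₂) (hx : x₁ = x₂) (hy : y₁ = y₂) :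
    Affine.Point.some _ _ h₁ = Affine.Point.some _ _ h₂ := by subst hx; subst hy; rfl

lemma hsqrt3 : (Real.sqrt 3 : ℂ) ^ 2 = 3 := by
  rw [← Complex.ofReal_pow, Real.sq_sqrt (by norm_num : (0:ℝ) ≤ 3)]
  norm_num

lemma h32s : (3 + 2 * (Real.sqrt 3 : ℂ)) ≠ 0 := by
  have h : (3 + 2 * (Real.sqrt 3 : ℂ)) = ((3 + 2 * Real.sqrt 3 : ℝ) : ℂ) := by push_cast; ring
  rw [h, Complex.ofReal_ne_zero]
  have := Real.sqrt_nonneg 3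
  positivity

/-- On `E₁ : y² = x³ + x² + x`, the point `B = (-2 - √3, (3 + 2√3) i)` lies on the curve
and has order `8`. -/
theorem E48a4_point_B :
    ∃ hB : E48a4.Nonsingular (-2 - (Real.sqrt 3 : ℂ))
        ((3 + 2 * (Real.sqrt 3 : ℂ)) * I),
      addOrderOf (Affine.Point.some _ _ hB) = 8 := by
  set s : ℂ := (Real.sqrt 3 : ℂ) with hs
  have hs2 : s ^ 2 = 3 := hsqrt3
  have hI2 : I ^ 2 = -1 := I_sq
  have hy1 : (3 + 2 * s) * I ≠ 0 := mul_ne_zero h32s I_ne_zero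
  -- B is nonsingular
  have hB : E48a4.Nonsingular (-2 - s) ((3 + 2 * s) * I) := by
    rw [Affine.nonsingular_iff, Affine.equation_iff]
    simp only [E48a4]
    refine ⟨?_, Or.inr fun h => hy1 (by linear_combination (1/2 : ℂ) * h)⟩
    linear_combination (1 + s) * hs2 + (9 + 12*s + 4*s^2) * hI2
  -- 2B = (-1, I) is nonsingular
  have hB2 : E48a4.Nonsingular (-1) I := by
    rw [Affine.nonsingular_iff, Affine.equation_iff]
    simp only [E48a4]
    exact ⟨by linear_combination hI2,
      Or.inr fun h => I_ne_zero (by linear_combination (1/2 : ℂ) * h)⟩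
  -- 4B = (0, 0) is nonsingular
  have hB4 : E48a4.Nonsingular 0 0 := by
    rw [Affine.nonsingular_iff, Affine.equation_iff]
    simp only [E48a4]
    exact ⟨by ring, Or.inl (by norm_num)⟩
  -- B + B = 2B
  have hyne : ((3 + 2 * s) * I) ≠ E48a4.negY (-2 - s) ((3 + 2 * s) * I) := by
    simp only [E48a4, Affine.negY]
    intro h
    exact hy1 (by linear_combination (1/2 : ℂ) * h)
  have hslope1 : E48a4.slope (-2 - s) (-2 - s) ((3 + 2 * s) * I) ((3 + 2 * s) * I)
      = -(1 + s) * I := by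
    rw [Affine.slope_of_Y_ne rfl hyne]
    simp only [E48a4, Affine.negY]
    rw [div_eq_iff (fun h => hy1 (by linear_combination (1/2 : ℂ) * h))]
    linear_combination (-1 : ℂ) * hs2 + (6 + 10*s + 4*s^2) * hI2
  have add1 : Affine.Point.some _ _ hB + Affine.Point.some _ _ hB = Affine.Point.some _ _ hB2 := by
    rw [Affine.Point.add_self_of_Y_ne hyne]
    apply E48a4.some_eq_some
    · simp only [Affine.addX, hslope1]
      simp only [E48a4]
      linear_combination (-1 : ℂ) * hs2 + (1 + 2*s + s^2) * hI2
    · simp only [Affine.addY, Affine.negAddY, Affine.negY, Affine.addX, hslope1]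
      simp only [E48a4]
      linear_combination (-s*I) * hs2 + (I + 3*s*I + 3*s^2*I + s^3*I) * hI2
  -- 2B + 2B = 4B
  have hyne2 : I ≠ E48a4.negY (-1) I := by
    simp only [E48a4, Affine.negY]
    intro h
    exact I_ne_zero (by linear_combination (1/2 : ℂ) * h)
  have hslope2 : E48a4.slope (-1) (-1) I I = -I := by
    rw [Affine.slope_of_Y_ne rfl hyne2]
    simp only [E48a4, Affine.negY]
    rw [div_eq_iff (fun h => I_ne_zero (by linear_combination (1/2 : ℂ) * h))]
    linear_combination (2 : ℂ) * hI2
  have add2 : Affine.Point.some _ _ hB2 + Affine.Point.some _ _ hB2 = Affine.Point.some _ _ hB4 := by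
    rw [Affine.Point.add_self_of_Y_ne hyne2]
    apply E48a4.some_eq_some
    · simp only [Affine.addX, hslope2]
      simp only [E48a4]
      linear_combination hI2
    · simp only [Affine.addY, Affine.negAddY, Affine.negY, Affine.addX, hslope2]
      simp only [E48a4]
      linear_combination I * hI2
  -- 4B + 4B = 0
  have add4 : Affine.Point.some _ _ hB4 + Affine.Point.some _ _ hB4 = 0 := by
    apply Affine.Point.add_self_of_Y_eq
    simp [E48a4, Affine.negY]
  refine ⟨hB, ?_⟩
  have h2 : (2 : ℕ) • Affine.Point.some _ _ hB = Affine.Point.some _ _ hB2 := by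
    rw [two_nsmul, add1]
  have h4 : (4 : ℕ) • Affine.Point.some _ _ hB = Affine.Point.some _ _ hB4 := by
    rw [show (4:ℕ) = 2 * 2 from rfl, mul_nsmul, h2, two_nsmul, add2]
  have h8 : (8 : ℕ) • Affine.Point.some _ _ hB = 0 := by
    rw [show (8:ℕ) = 4 * 2 from rfl, mul_nsmul, h4, two_nsmul, add4]
  have hne : (4 : ℕ) • Affine.Point.some _ _ hB ≠ 0 := by
    rw [h4]
    exact fun h => by simpa using h
  haveI : Fact (Nat.Prime 2) := ⟨Nat.prime_two⟩
  have key : addOrderOf (Affine.Point.some _ _ hB) = 2 ^ (2 + 1) :=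
    addOrderOf_eq_prime_pow (by rwa [show (2:ℕ)^2 = 4 from rfl])
      (by rwa [show (2:ℕ)^(2+1) = 8 from rfl])
  rw [key]; norm_num
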